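/- For all s > d/2, there exists C > 0 such that for all σ ≥ 0, the space H^{σ,s}(T^d) is an algebra: ‖u₁u₂‖_{H^{σ,s}} ≤ C ‖u₁‖_{H^{σ,s}} ‖u₂‖_{H^{σ,s}} for all u₁, u₂ ∈ H^{σ,s}(T^d). -/

import Mathlib

open scoped ENNReal BigOperators
open scoped NNReal

/-- Euclidean norm of a lattice point `ξ ∈ ℤ^d`. -/
noncomputable def latNorm {d : ℕ} (ξ : Fin d → ℤ) : ℝ :=
  Real.sqrt (∑ i, ((ξ i : ℝ)) ^ 2)

/-- Japanese bracket `⟨ξ⟩ = (1+|ξ|²)^{1/2}`. -/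
noncomputable def latJap {d : ℕ} (ξ : Fin d → ℤ) : ℝ :=
  Real.sqrt (1 + ∑ i, ((ξ i : ℝ)) ^ 2)

/-- Weight `e^{2σ|ξ|}⟨ξ⟩^{2s}` of the analytic Sobolev space `H^{σ,s}(T^d)`. -/
noncomputable def hWeight {d : ℕ} (σ s : ℝ) (ξ : Fin d → ℤ) : ℝ≥0∞ :=
  ENNReal.ofReal (Real.exp (2 * σ * latNorm ξ) * (latJap ξ) ^ (2 * s))

/-- Squared `H^{σ,s}(T^d)` norm of a function given by its Fourier
coefficients `c : ℤ^d → ℂ`. -/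
noncomputable def hNormSq {d : ℕ} (σ s : ℝ) (c : (Fin d → ℤ) → ℂ) : ℝ≥0∞ :=
  ∑' ξ, hWeight σ s ξ * (‖c ξ‖₊ : ℝ≥0∞) ^ 2

/-- `H^{σ,s}(T^d)` norm. -/
noncomputable def hNorm {d : ℕ} (σ s : ℝ) (c : (Fin d → ℤ) → ℂ) : ℝ≥0∞ :=
  (hNormSq σ s c) ^ (1/2 : ℝ)

/-- Convolution of Fourier coefficients: this represents the pointwise
product of the corresponding functions on `T^d` (up to the fixed
normalization factor `(2π)^{-d}`, harmless for the estimates below). -/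
noncomputable def conv {d : ℕ} (f g : (Fin d → ℤ) → ℂ) : (Fin d → ℤ) → ℂ :=
  fun ξ => ∑' ζ, f (ξ - ζ) * g ζ

open MeasureTheory

namespace S9

variable {d : ℕ}


lemma latNorm_nonneg (ξ : Fin d → ℤ) : 0 ≤ latNorm ξ := Real.sqrt_nonneg _

lemma one_le_latJap (ξ : Fin d → ℤ) : 1 ≤ latJap ξ := by
  rw [show (1:ℝ) = Real.sqrt 1 by simp]
  apply Real.sqrt_le_sqrt
  have : 0 ≤ ∑ i, ((ξ i : ℝ)) ^ 2 := Finset.sum_nonneg fun i _ => sq_nonneg _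
  linarith

lemma latJap_pos (ξ : Fin d → ℤ) : 0 < latJap ξ := lt_of_lt_of_le one_pos (one_le_latJap ξ)

lemma latJap_eq (ξ : Fin d → ℤ) : latJap ξ = Real.sqrt (1 + latNorm ξ ^ 2) := by
  rw [latJap, latNorm, Real.sq_sqrt]
  exact Finset.sum_nonneg fun i _ => sq_nonneg _

lemma latNorm_triangle (x y : Fin d → ℤ) : latNorm (x + y) ≤ latNorm x + latNorm y := by
  have hx : 0 ≤ ∑ i, ((x i : ℝ)) ^ 2 := Finset.sum_nonneg fun i _ => sq_nonneg _
  have hy : 0 ≤ ∑ i, ((y i : ℝ)) ^ 2 := Finset.sum_nonneg fun i _ => sq_nonneg _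
  have hcs : (∑ i, ((x i : ℝ)) * ((y i : ℝ))) ^ 2 ≤
      (∑ i, ((x i : ℝ)) ^ 2) * (∑ i, ((y i : ℝ)) ^ 2) :=
    Finset.sum_mul_sq_le_sq_mul_sq Finset.univ _ _
  have hcs' : (∑ i, ((x i : ℝ)) * ((y i : ℝ))) ≤ latNorm x * latNorm y := by
    have h1 : (∑ i, ((x i : ℝ)) * ((y i : ℝ))) ≤ |∑ i, ((x i : ℝ)) * ((y i : ℝ))| := le_abs_self _
    have h2 : |∑ i, ((x i : ℝ)) * ((y i : ℝ))| ≤ Real.sqrt ((∑ i, ((x i : ℝ)) ^ 2) * (∑ i, ((y i : ℝ)) ^ 2)) := by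
      rw [← Real.sqrt_sq_eq_abs]
      exact Real.sqrt_le_sqrt hcs
    rw [Real.sqrt_mul hx] at h2
    exact h1.trans h2
  have hexp : ∑ i, (((x + y) i : ℝ)) ^ 2
      = (∑ i, ((x i : ℝ)) ^ 2) + 2 * (∑ i, ((x i : ℝ)) * ((y i : ℝ))) + ∑ i, ((y i : ℝ)) ^ 2 := by
    rw [Finset.mul_sum, ← Finset.sum_add_distrib, ← Finset.sum_add_distrib]
    refine Finset.sum_congr rfl fun i _ => ?_
    simp only [Pi.add_apply]; push_cast; ring
  have hsx := Real.sq_sqrt hx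
  have hsy := Real.sq_sqrt hy
  rw [latNorm, latNorm, latNorm] at *
  calc Real.sqrt (∑ i, (((x + y) i : ℝ)) ^ 2)
      ≤ Real.sqrt ((Real.sqrt (∑ i, ((x i : ℝ)) ^ 2) + Real.sqrt (∑ i, ((y i : ℝ)) ^ 2)) ^ 2) := by
        apply Real.sqrt_le_sqrt; rw [hexp]; nlinarith
    _ = _ := Real.sqrt_sq (by positivity)

lemma latJap_triangle (x y : Fin d → ℤ) : latJap (x + y) ≤ latJap x + latJap y := by
  have h1 : (0:ℝ) ≤ 1 + latNorm x ^ 2 := by positivity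
  have h2 : (0:ℝ) ≤ 1 + latNorm y ^ 2 := by positivity
  have hsa := Real.sq_sqrt h1
  have hsb := Real.sq_sqrt h2
  have hna := Real.sqrt_nonneg (1 + latNorm x ^ 2)
  have hnb := Real.sqrt_nonneg (1 + latNorm y ^ 2)
  have hab : 1 + latNorm x * latNorm y ≤
      Real.sqrt (1 + latNorm x ^ 2) * Real.sqrt (1 + latNorm y ^ 2) := by
    rw [← Real.sqrt_mul h1]
    refine (Real.le_sqrt' (by nlinarith [latNorm_nonneg x, latNorm_nonneg y])).mpr ?_
    nlinarith [sq_nonneg (latNorm x - latNorm y)]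
  rw [latJap_eq, latJap_eq, latJap_eq]
  have hmono : latNorm (x + y) ^ 2 ≤ (latNorm x + latNorm y) ^ 2 := by
    have := latNorm_triangle x y
    nlinarith [latNorm_nonneg (x+y), latNorm_nonneg x, latNorm_nonneg y]
  calc Real.sqrt (1 + latNorm (x + y) ^ 2)
      ≤ Real.sqrt ((Real.sqrt (1 + latNorm x ^ 2) + Real.sqrt (1 + latNorm y ^ 2)) ^ 2) := by
        apply Real.sqrt_le_sqrt; nlinarith [latNorm_nonneg x, latNorm_nonneg y]
    _ = _ := Real.sqrt_sq (by positivity)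

-- Cauchy-Schwarz for ENNReal tsums on a countable type
lemma tsum_cs {α : Type*} [Countable α] [MeasurableSpace α] [MeasurableSingletonClass α]
    (f g : α → ℝ≥0∞) :
    ∑' x, f x * g x ≤ (∑' x, (f x)^2)^(1/2:ℝ) * (∑' x, (g x)^2)^(1/2:ℝ) := by
  have hconj : Real.HolderConjugate 2 2 := ⟨by norm_num, by norm_num, by norm_num⟩
  have h := ENNReal.lintegral_mul_le_Lp_mul_Lq (Measure.count (α := α)) hconj
    (measurable_of_countable f).aemeasurable (measurable_of_countable g).aemeasurable
  simp only [Pi.mul_apply, lintegral_count] at h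
  calc ∑' x, f x * g x ≤ (∑' x, f x ^ (2:ℝ))^(1/2:ℝ) * (∑' x, g x ^ (2:ℝ))^(1/2:ℝ) := h
    _ = _ := by
        congr 1 <;> congr 1 <;> refine tsum_congr fun x => ?_ <;>
          rw [← ENNReal.rpow_natCast _ 2] <;> norm_num

lemma sq_rpow_half (a : ℝ≥0∞) : (a^2)^(1/2:ℝ) = a := by
  rw [← ENNReal.rpow_natCast a 2, ← ENNReal.rpow_mul]
  norm_num

lemma rpow_half_sq (a : ℝ≥0∞) : (a^(1/2:ℝ))^2 = a := by
  rw [← ENNReal.rpow_natCast _ 2, ← ENNReal.rpow_mul]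
  norm_num


lemma tsum_translate (F : (Fin d → ℤ) → ℝ≥0∞) (ζ : Fin d → ℤ) :
    ∑' ξ, F (ξ - ζ) = ∑' ξ, F ξ := (Equiv.subRight ζ).tsum_eq F

lemma young (F G : (Fin d → ℤ) → ℝ≥0∞) :
    ∑' ξ, (∑' ζ, F (ξ - ζ) * G ζ)^2 ≤ (∑' ζ, G ζ)^2 * ∑' ξ, (F ξ)^2 := by
  have inner : ∀ ξ, (∑' ζ, F (ξ - ζ) * G ζ)^2
      ≤ (∑' ζ, G ζ) * ∑' ζ, (F (ξ - ζ))^2 * G ζ := by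
    intro ξ
    have h0 : ∑' ζ, F (ξ - ζ) * G ζ
        = ∑' ζ, (F (ξ - ζ) * (G ζ)^(1/2:ℝ)) * (G ζ)^(1/2:ℝ) := by
      refine tsum_congr fun ζ => ?_
      rw [mul_assoc, ← sq, rpow_half_sq]
    rw [h0]
    calc (∑' ζ, (F (ξ - ζ) * (G ζ)^(1/2:ℝ)) * (G ζ)^(1/2:ℝ))^2
        ≤ ((∑' ζ, (F (ξ - ζ) * (G ζ)^(1/2:ℝ))^2)^(1/2:ℝ)
            * (∑' ζ, ((G ζ)^(1/2:ℝ))^2)^(1/2:ℝ))^2 := by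
          gcongr
          exact tsum_cs _ _
      _ = (∑' ζ, (F (ξ - ζ))^2 * G ζ) * ∑' ζ, G ζ := by
          rw [mul_pow, rpow_half_sq, rpow_half_sq]
          congr 1 <;> refine tsum_congr fun ζ => ?_
          · rw [mul_pow, rpow_half_sq]
          · rw [rpow_half_sq]
      _ = (∑' ζ, G ζ) * ∑' ζ, (F (ξ - ζ))^2 * G ζ := mul_comm _ _
  calc ∑' ξ, (∑' ζ, F (ξ - ζ) * G ζ)^2
      ≤ ∑' ξ, (∑' ζ, G ζ) * ∑' ζ, (F (ξ - ζ))^2 * G ζ := ENNReal.tsum_le_tsum inner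
    _ = (∑' ζ, G ζ) * ∑' ξ, ∑' ζ, (F (ξ - ζ))^2 * G ζ := ENNReal.tsum_mul_left
    _ = (∑' ζ, G ζ) * ∑' ζ, ∑' ξ, (F (ξ - ζ))^2 * G ζ := by rw [ENNReal.tsum_comm]
    _ = (∑' ζ, G ζ) * ∑' ζ, (∑' ξ, (F (ξ - ζ))^2) * G ζ := by
          congr 1; exact tsum_congr fun ζ => ENNReal.tsum_mul_right
    _ = (∑' ζ, G ζ) * ∑' ζ, (∑' ξ, (F ξ)^2) * G ζ := by
          congr 1; refine tsum_congr fun ζ => ?_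
          rw [tsum_translate (fun ξ => (F ξ)^2) ζ]
    _ = (∑' ζ, G ζ) * ((∑' ξ, (F ξ)^2) * ∑' ζ, G ζ) := by rw [ENNReal.tsum_mul_left]
    _ = (∑' ζ, G ζ)^2 * ∑' ξ, (F ξ)^2 := by ring

lemma summable_one_dim {t : ℝ} (ht : 1/2 < t) :
    Summable (fun n : ℤ => (1 + (n:ℝ)^2)^(-t)) := by
  have h2t : (1:ℝ) < 2*t := by linarith
  have hsum : Summable (fun n : ℤ => (2:ℝ)^t * (1 / |(n:ℝ) + 1/2| ^ (2*t))) :=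
    ((Real.summable_one_div_int_add_rpow (1/2) (2*t)).mpr h2t).mul_left _
  refine hsum.of_nonneg_of_le (fun n => Real.rpow_nonneg (by positivity) _) fun n => ?_
  have hpos : (0:ℝ) < 1 + (n:ℝ)^2 := by positivity
  have habs : (0:ℝ) < |(n:ℝ) + 1/2| := by
    rw [abs_pos]
    intro h
    have : (2*n:ℤ) = -1 := by
      have : (2*(n:ℝ)) = -1 := by linarith
      exact_mod_cast this
    omega
  have hb : |(n:ℝ) + 1/2| ^ (2*t) ≤ (2:ℝ)^t * (1 + (n:ℝ)^2)^t := by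
    have h1 : |(n:ℝ) + 1/2| ^ (2*t) = (|(n:ℝ) + 1/2| ^ (2:ℕ)) ^ t := by
      rw [← Real.rpow_natCast_mul (abs_nonneg _)]; norm_num
    rw [h1, ← Real.mul_rpow (by norm_num) hpos.le]
    apply Real.rpow_le_rpow (by positivity) _ (by linarith)
    rw [sq_abs]
    nlinarith [sq_nonneg ((n:ℝ) - 1/2)]
  rw [Real.rpow_neg hpos.le, inv_eq_one_div, mul_one_div, div_le_div_iff₀ (Real.rpow_pos_of_pos hpos t) (Real.rpow_pos_of_pos habs _)]
  rw [one_mul]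
  exact hb

lemma tsum_pi_pow (d : ℕ) (g : ℤ → ℝ≥0∞) :
    ∑' ζ : Fin d → ℤ, ∏ i, g (ζ i) = (∑' n, g n)^d := by
  induction d with
  | zero =>
      rw [pow_zero]
      rw [tsum_eq_single (default : Fin 0 → ℤ) (fun b' hb' => absurd (Subsingleton.elim b' default) hb')]
      simp
  | succ d ih =>
      rw [← (Fin.consEquiv (fun _ : Fin (d+1) => ℤ)).tsum_eq, pow_succ]
      have : ∀ p : ℤ × (Fin d → ℤ), ∏ i, g ((Fin.consEquiv (fun _ : Fin (d+1) => ℤ)) p i)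
          = g p.1 * ∏ i, g (p.2 i) := by
        intro p
        rw [Fin.prod_univ_succ]
        simp [Fin.consEquiv]
      rw [tsum_congr this,
        ENNReal.tsum_prod (f := fun n (ζ : Fin d → ℤ) => g n * ∏ i, g (ζ i))]
      simp_rw [ENNReal.tsum_mul_left]
      rw [ENNReal.tsum_mul_right, ih]; ring


lemma Kd_ne_top (d : ℕ) {s : ℝ} (hs : (d:ℝ)/2 < s) :
    ∑' ζ : Fin d → ℤ, ENNReal.ofReal (latJap ζ ^ (-(2*s))) ≠ ⊤ := by
  rcases Nat.eq_zero_or_pos d with hd | hd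
  · subst hd
    rw [tsum_eq_single (default : Fin 0 → ℤ)
      (fun b' hb' => absurd (Subsingleton.elim b' default) hb')]
    exact ENNReal.ofReal_ne_top
  · have hdR : (0:ℝ) < d := by exact_mod_cast hd
    set t : ℝ := s / d with htdef
    have ht : 1/2 < t := by
      rw [htdef, lt_div_iff₀ hdR]
      calc (1:ℝ)/2 * d = (d:ℝ)/2 := by ring
        _ < s := hs
    have hts : (d:ℝ) * t = s := by rw [htdef]; field_simp
    have hbound : ∀ ζ : Fin d → ℤ, ENNReal.ofReal (latJap ζ ^ (-(2*s)))
        ≤ ∏ i, ENNReal.ofReal ((1 + ((ζ i : ℝ))^2)^(-t)) := by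
      intro ζ
      set X : ℝ := 1 + ∑ i, ((ζ i : ℝ))^2 with hXdef
      have hX0 : (0:ℝ) < X := by
        have : 0 ≤ ∑ i, ((ζ i : ℝ))^2 := Finset.sum_nonneg fun i _ => sq_nonneg _
        rw [hXdef]; linarith
      have hjap : latJap ζ ^ (-(2*s)) = X ^ (-s) := by
        rw [latJap, Real.sqrt_eq_rpow, ← Real.rpow_mul (by positivity : (0:ℝ) ≤ 1 + ∑ i, ((ζ i : ℝ))^2), ← hXdef]
        congr 1; ring
      have hprod_pos : (0:ℝ) < ∏ i, (1 + ((ζ i : ℝ))^2) :=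
        Finset.prod_pos fun i _ => by positivity
      have hle : ∏ i, (1 + ((ζ i : ℝ))^2) ≤ X ^ (d:ℕ) := by
        calc ∏ i, (1 + ((ζ i : ℝ))^2) ≤ ∏ _i : Fin d, X := by
              refine Finset.prod_le_prod (fun i _ => by positivity) fun i _ => ?_
              rw [hXdef]
              have : ((ζ i : ℝ))^2 ≤ ∑ j, ((ζ j : ℝ))^2 :=
                Finset.single_le_sum (f := fun j => ((ζ j : ℝ))^2) (fun j _ => sq_nonneg _) (Finset.mem_univ i)
              linarith
          _ = X ^ (d:ℕ) := by simp [Finset.prod_const]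
      have hstep1 : X ^ (-s) ≤ (∏ i, (1 + ((ζ i : ℝ))^2)) ^ (-t) := by
        have h1 : X ^ (-s) = (X ^ (d:ℕ)) ^ (-t) := by
          rw [← Real.rpow_natCast_mul hX0.le]
          congr 1
          rw [mul_neg, hts]
        rw [h1]
        exact Real.rpow_le_rpow_of_nonpos hprod_pos hle (by linarith)
      have hstep2 : (∏ i, (1 + ((ζ i : ℝ))^2)) ^ (-t) = ∏ i, (1 + ((ζ i : ℝ))^2) ^ (-t) :=
        (Real.finset_prod_rpow Finset.univ _ (fun i _ => by positivity) (-t)).symm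
      calc ENNReal.ofReal (latJap ζ ^ (-(2*s)))
          ≤ ENNReal.ofReal (∏ i, (1 + ((ζ i : ℝ))^2) ^ (-t)) := by
            apply ENNReal.ofReal_le_ofReal
            rw [hjap, ← hstep2]
            exact hstep1
        _ = ∏ i, ENNReal.ofReal ((1 + ((ζ i : ℝ))^2)^(-t)) :=
            ENNReal.ofReal_prod_of_nonneg fun i _ => Real.rpow_nonneg (by positivity) _
    have hS1 : (∑' n : ℤ, ENNReal.ofReal ((1 + ((n:ℝ))^2)^(-t))) ≠ ⊤ := by
      rw [← ENNReal.ofReal_tsum_of_nonneg (fun n => Real.rpow_nonneg (by positivity) _)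
        (summable_one_dim ht)]
      exact ENNReal.ofReal_ne_top
    refine ne_top_of_le_ne_top ?_ (ENNReal.tsum_le_tsum hbound)
    rw [tsum_pi_pow d (fun n => ENNReal.ofReal ((1 + ((n:ℝ))^2)^(-t)))]
    exact ENNReal.pow_ne_top hS1

noncomputable def ee {d : ℕ} (σ : ℝ) (ξ : Fin d → ℤ) : ℝ≥0∞ :=
  ENNReal.ofReal (Real.exp (σ * latNorm ξ))

noncomputable def jjp {d : ℕ} (s : ℝ) (ξ : Fin d → ℤ) : ℝ≥0∞ :=
  ENNReal.ofReal (latJap ξ ^ s)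

noncomputable def ww {d : ℕ} (σ s : ℝ) (ξ : Fin d → ℤ) : ℝ≥0∞ :=
  ee σ ξ * jjp s ξ

lemma hWeight_eq (σ s : ℝ) (ξ : Fin d → ℤ) : hWeight σ s ξ = (ww σ s ξ)^2 := by
  rw [hWeight, ww, ee, jjp, mul_pow, ← ENNReal.ofReal_pow (Real.exp_nonneg _),
    ← ENNReal.ofReal_pow (Real.rpow_nonneg (latJap_pos ξ).le _),
    ← ENNReal.ofReal_mul (by positivity)]
  congr 2
  · rw [← Real.exp_nat_mul]; ring_nf
  · rw [← Real.rpow_natCast (latJap ξ ^ s) 2, ← Real.rpow_mul (latJap_pos ξ).le]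
    norm_num; ring_nf

lemma ee_sub_mul {σ : ℝ} (hσ : 0 ≤ σ) (ξ ζ : Fin d → ℤ) :
    ee σ ξ ≤ ee σ (ξ - ζ) * ee σ ζ := by
  rw [ee, ee, ee, ← ENNReal.ofReal_mul (Real.exp_nonneg _), ← Real.exp_add]
  apply ENNReal.ofReal_le_ofReal
  apply Real.exp_le_exp.mpr
  rw [← mul_add]
  apply mul_le_mul_of_nonneg_left _ hσ
  have := latNorm_triangle (ξ - ζ) ζ
  rwa [sub_add_cancel] at this

lemma jjp_peetre {s : ℝ} (hsp : 0 ≤ s) (ξ ζ : Fin d → ℤ) :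
    jjp s ξ ≤ ENNReal.ofReal (2^s) * (jjp s (ξ - ζ) + jjp s ζ) := by
  rw [jjp, jjp, jjp, ← ENNReal.ofReal_add (Real.rpow_nonneg (latJap_pos _).le _)
    (Real.rpow_nonneg (latJap_pos _).le _), ← ENNReal.ofReal_mul (by positivity)]
  apply ENNReal.ofReal_le_ofReal
  have htri : latJap ξ ≤ latJap (ξ - ζ) + latJap ζ := by
    have := latJap_triangle (ξ - ζ) ζ
    rwa [sub_add_cancel] at this
  set b := latJap (ξ - ζ)
  set c := latJap ζ
  have hb : 0 < b := latJap_pos _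
  have hc : 0 < c := latJap_pos _
  have hj : 0 < latJap ξ := latJap_pos _
  rcases le_total b c with h | h
  · calc latJap ξ ^ s ≤ (2*c) ^ s := by
          apply Real.rpow_le_rpow hj.le (by linarith) hsp
      _ = 2^s * c^s := Real.mul_rpow (by norm_num) hc.le
      _ ≤ 2^s * (b^s + c^s) := by
          have : (0:ℝ) ≤ b^s := Real.rpow_nonneg hb.le _
          have h2 : (0:ℝ) ≤ (2:ℝ)^s := Real.rpow_nonneg (by norm_num) _
          nlinarith
  · calc latJap ξ ^ s ≤ (2*b) ^ s := by
          apply Real.rpow_le_rpow hj.le (by linarith) hsp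
      _ = 2^s * b^s := Real.mul_rpow (by norm_num) hb.le
      _ ≤ 2^s * (b^s + c^s) := by
          have : (0:ℝ) ≤ c^s := Real.rpow_nonneg hc.le _
          have h2 : (0:ℝ) ≤ (2:ℝ)^s := Real.rpow_nonneg (by norm_num) _
          nlinarith

lemma ww_bound {σ s : ℝ} (hσ : 0 ≤ σ) (hsp : 0 ≤ s) (ξ ζ : Fin d → ℤ) :
    ww σ s ξ ≤ ENNReal.ofReal (2^s) *
      (ww σ s (ξ - ζ) * ee σ ζ + ee σ (ξ - ζ) * ww σ s ζ) := by
  calc ww σ s ξ = ee σ ξ * jjp s ξ := rfl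
    _ ≤ (ee σ (ξ - ζ) * ee σ ζ) * (ENNReal.ofReal (2^s) * (jjp s (ξ - ζ) + jjp s ζ)) :=
        mul_le_mul' (ee_sub_mul hσ ξ ζ) (jjp_peetre hsp ξ ζ)
    _ = ENNReal.ofReal (2^s) *
        (ww σ s (ξ - ζ) * ee σ ζ + ee σ (ξ - ζ) * ww σ s ζ) := by
      rw [ww, ww]; ring

lemma enorm_conv_le (u₁ u₂ : (Fin d → ℤ) → ℂ) (ξ : Fin d → ℤ) :
    (‖conv u₁ u₂ ξ‖₊ : ℝ≥0∞) ≤ ∑' ζ, (‖u₁ (ξ - ζ)‖₊ : ℝ≥0∞) * (‖u₂ ζ‖₊ : ℝ≥0∞) := by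
  by_cases h : Summable fun ζ => ‖u₁ (ξ - ζ) * u₂ ζ‖₊
  · calc (‖conv u₁ u₂ ξ‖₊ : ℝ≥0∞) ≤ ((∑' ζ, ‖u₁ (ξ - ζ) * u₂ ζ‖₊ : ℝ≥0) : ℝ≥0∞) :=
          ENNReal.coe_le_coe.mpr (nnnorm_tsum_le h)
      _ = ∑' ζ, ((‖u₁ (ξ - ζ) * u₂ ζ‖₊ : ℝ≥0) : ℝ≥0∞) := ENNReal.coe_tsum h
      _ = ∑' ζ, (‖u₁ (ξ - ζ)‖₊ : ℝ≥0∞) * (‖u₂ ζ‖₊ : ℝ≥0∞) := by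
          refine tsum_congr fun ζ => ?_
          simp [nnnorm_mul, ENNReal.coe_mul]
  · have hns : ¬ Summable fun ζ => u₁ (ξ - ζ) * u₂ ζ := by
      intro hsm
      apply h
      rw [← NNReal.summable_coe]
      simp only [coe_nnnorm]
      exact summable_norm_iff.mpr hsm
    rw [conv, tsum_eq_zero_of_not_summable hns]
    simp

lemma sq_add_le (a b : ℝ≥0∞) : (a + b)^2 ≤ 4*(a^2 + b^2) := by
  rcases le_total a b with h | h
  · calc (a + b)^2 ≤ (b + b)^2 := by gcongr
      _ = 4*b^2 := by ring
      _ ≤ 4*(a^2 + b^2) := by gcongr; exact le_add_self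
  · calc (a + b)^2 ≤ (a + a)^2 := by gcongr
      _ = 4*a^2 := by ring
      _ ≤ 4*(a^2 + b^2) := by gcongr; exact le_self_add


lemma conv_comm (P Q : (Fin d → ℤ) → ℝ≥0∞) (ξ : Fin d → ℤ) :
    ∑' ζ, P (ξ - ζ) * Q ζ = ∑' ζ, Q (ξ - ζ) * P ζ := by
  rw [← (Equiv.subLeft ξ).tsum_eq (fun ζ => Q (ξ - ζ) * P ζ)]
  refine tsum_congr fun ζ => ?_
  simp [Equiv.subLeft, sub_sub_cancel, mul_comm]

end S9

/-- For `s > d/2`, the space `H^{σ,s}(T^d)` is an algebra,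
with a constant uniform in `σ ≥ 0`. -/
theorem statement9 (d : ℕ) (s : ℝ) (hs : (d : ℝ) / 2 < s) :
    ∃ C : ℝ, 0 < C ∧ ∀ σ : ℝ, 0 ≤ σ → ∀ u₁ u₂ : (Fin d → ℤ) → ℂ,
      hNormSq σ s u₁ ≠ ⊤ → hNormSq σ s u₂ ≠ ⊤ →
      hNorm σ s (conv u₁ u₂) ≤ ENNReal.ofReal C * hNorm σ s u₁ * hNorm σ s u₂ := by
  have hsp : (0:ℝ) ≤ s := le_of_lt (lt_of_le_of_lt (by positivity) hs)
  set K : ℝ≥0∞ := ∑' ζ : Fin d → ℤ, ENNReal.ofReal (latJap ζ ^ (-(2*s))) with hKdef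
  have hKne : K ≠ ⊤ := S9.Kd_ne_top d hs
  set M : ℝ≥0∞ := ENNReal.ofReal (2^s) ^ 2 * 4 * (2 * K) with hMdef
  have hMne : M ≠ ⊤ := by
    rw [hMdef]
    exact ENNReal.mul_ne_top (ENNReal.mul_ne_top (ENNReal.pow_ne_top ENNReal.ofReal_ne_top)
      (by simp)) (ENNReal.mul_ne_top (by simp) hKne)
  refine ⟨M.toReal ^ (1/2 : ℝ) + 1, by positivity, fun σ hσ u₁ u₂ _ _ => ?_⟩
  set C : ℝ := M.toReal ^ (1/2 : ℝ) + 1 with hCdef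
  -- notation
  set F₁ : (Fin d → ℤ) → ℝ≥0∞ := fun ξ => S9.ww σ s ξ * (‖u₁ ξ‖₊ : ℝ≥0∞) with hF₁
  set F₂ : (Fin d → ℤ) → ℝ≥0∞ := fun ξ => S9.ww σ s ξ * (‖u₂ ξ‖₊ : ℝ≥0∞) with hF₂
  set G₁ : (Fin d → ℤ) → ℝ≥0∞ := fun ξ => S9.ee σ ξ * (‖u₁ ξ‖₊ : ℝ≥0∞) with hG₁
  set G₂ : (Fin d → ℤ) → ℝ≥0∞ := fun ξ => S9.ee σ ξ * (‖u₂ ξ‖₊ : ℝ≥0∞) with hG₂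
  have hNF : ∀ (u : (Fin d → ℤ) → ℂ),
      hNormSq σ s u = ∑' ξ, (S9.ww σ s ξ * (‖u ξ‖₊ : ℝ≥0∞))^2 := by
    intro u
    refine tsum_congr fun ξ => ?_
    rw [S9.hWeight_eq, mul_pow]
  -- control of the ℓ¹ norms of G by the H norms
  have hG_le : ∀ (u : (Fin d → ℤ) → ℂ),
      ∑' ζ, S9.ee σ ζ * (‖u ζ‖₊ : ℝ≥0∞)
        ≤ K ^ (1/2:ℝ) * (hNormSq σ s u) ^ (1/2:ℝ) := by
    intro u
    have hsplit : ∀ ζ : Fin d → ℤ, S9.ee σ ζ * (‖u ζ‖₊ : ℝ≥0∞)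
        = ENNReal.ofReal (latJap ζ ^ (-s)) * (S9.ww σ s ζ * (‖u ζ‖₊ : ℝ≥0∞)) := by
      intro ζ
      have : ENNReal.ofReal (latJap ζ ^ (-s)) * S9.jjp s ζ = 1 := by
        rw [S9.jjp, ← ENNReal.ofReal_mul (Real.rpow_nonneg (S9.latJap_pos ζ).le _),
          ← Real.rpow_add (S9.latJap_pos ζ)]
        norm_num
      rw [S9.ww]
      calc S9.ee σ ζ * (‖u ζ‖₊ : ℝ≥0∞)
          = (ENNReal.ofReal (latJap ζ ^ (-s)) * S9.jjp s ζ) * (S9.ee σ ζ * (‖u ζ‖₊ : ℝ≥0∞)) := by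
            rw [this, one_mul]
        _ = ENNReal.ofReal (latJap ζ ^ (-s)) * (S9.ee σ ζ * S9.jjp s ζ * (‖u ζ‖₊ : ℝ≥0∞)) := by
            ring
    calc ∑' ζ, S9.ee σ ζ * (‖u ζ‖₊ : ℝ≥0∞)
        = ∑' ζ, ENNReal.ofReal (latJap ζ ^ (-s)) * (S9.ww σ s ζ * (‖u ζ‖₊ : ℝ≥0∞)) :=
          tsum_congr hsplit
      _ ≤ (∑' ζ, (ENNReal.ofReal (latJap ζ ^ (-s)))^2) ^ (1/2:ℝ)
            * (∑' ζ, (S9.ww σ s ζ * (‖u ζ‖₊ : ℝ≥0∞))^2) ^ (1/2:ℝ) := S9.tsum_cs _ _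
      _ = K ^ (1/2:ℝ) * (hNormSq σ s u) ^ (1/2:ℝ) := by
          rw [← hNF u]
          congr 2
          rw [hKdef]
          refine tsum_congr fun ζ => ?_
          rw [sq, ← ENNReal.ofReal_mul (Real.rpow_nonneg (S9.latJap_pos ζ).le _),
            ← Real.rpow_add (S9.latJap_pos ζ)]
          congr 2
          ring
  have hG_sq_le : ∀ (u : (Fin d → ℤ) → ℂ),
      (∑' ζ, S9.ee σ ζ * (‖u ζ‖₊ : ℝ≥0∞))^2 ≤ K * hNormSq σ s u := by
    intro u
    calc (∑' ζ, S9.ee σ ζ * (‖u ζ‖₊ : ℝ≥0∞))^2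
        ≤ (K ^ (1/2:ℝ) * (hNormSq σ s u) ^ (1/2:ℝ))^2 := by
          gcongr
          exact hG_le u
      _ = K * hNormSq σ s u := by
          rw [mul_pow, S9.rpow_half_sq, S9.rpow_half_sq]
  -- pointwise bound on the weighted convolution
  set A : (Fin d → ℤ) → ℝ≥0∞ := fun ξ => ∑' ζ, F₁ (ξ - ζ) * G₂ ζ with hA
  set B : (Fin d → ℤ) → ℝ≥0∞ := fun ξ => ∑' ζ, F₂ (ξ - ζ) * G₁ ζ with hB
  have hpt : ∀ ξ : Fin d → ℤ, S9.ww σ s ξ * (‖conv u₁ u₂ ξ‖₊ : ℝ≥0∞)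
      ≤ ENNReal.ofReal (2^s) * (A ξ + B ξ) := by
    intro ξ
    calc S9.ww σ s ξ * (‖conv u₁ u₂ ξ‖₊ : ℝ≥0∞)
        ≤ S9.ww σ s ξ * ∑' ζ, (‖u₁ (ξ - ζ)‖₊ : ℝ≥0∞) * (‖u₂ ζ‖₊ : ℝ≥0∞) :=
          mul_le_mul_right (S9.enorm_conv_le u₁ u₂ ξ) _
      _ = ∑' ζ, S9.ww σ s ξ * ((‖u₁ (ξ - ζ)‖₊ : ℝ≥0∞) * (‖u₂ ζ‖₊ : ℝ≥0∞)) :=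
          ENNReal.tsum_mul_left.symm
      _ ≤ ∑' ζ, ENNReal.ofReal (2^s) * (F₁ (ξ - ζ) * G₂ ζ + G₁ (ξ - ζ) * F₂ ζ) := by
          refine ENNReal.tsum_le_tsum fun ζ => ?_
          calc S9.ww σ s ξ * ((‖u₁ (ξ - ζ)‖₊ : ℝ≥0∞) * (‖u₂ ζ‖₊ : ℝ≥0∞))
              ≤ (ENNReal.ofReal (2^s) *
                  (S9.ww σ s (ξ - ζ) * S9.ee σ ζ + S9.ee σ (ξ - ζ) * S9.ww σ s ζ))
                  * ((‖u₁ (ξ - ζ)‖₊ : ℝ≥0∞) * (‖u₂ ζ‖₊ : ℝ≥0∞)) :=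
                mul_le_mul_left (S9.ww_bound hσ hsp ξ ζ) _
            _ = ENNReal.ofReal (2^s) * (F₁ (ξ - ζ) * G₂ ζ + G₁ (ξ - ζ) * F₂ ζ) := by
                rw [hF₁, hF₂, hG₁, hG₂]
                ring
      _ = ENNReal.ofReal (2^s) * (A ξ + B ξ) := by
          rw [ENNReal.tsum_mul_left, ENNReal.tsum_add]
          simp only [hA, hB]
          rw [S9.conv_comm G₁ F₂ ξ]
  -- summing up
  have hmain : hNormSq σ s (conv u₁ u₂) ≤ M * (hNormSq σ s u₁ * hNormSq σ s u₂) := by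
    calc hNormSq σ s (conv u₁ u₂)
        = ∑' ξ, (S9.ww σ s ξ * (‖conv u₁ u₂ ξ‖₊ : ℝ≥0∞))^2 := hNF _
      _ ≤ ∑' ξ, (ENNReal.ofReal (2^s) * (A ξ + B ξ))^2 := by
          refine ENNReal.tsum_le_tsum fun ξ => ?_
          exact pow_le_pow_left' (hpt ξ) 2
      _ = ENNReal.ofReal (2^s) ^ 2 * ∑' ξ, (A ξ + B ξ)^2 := by
          rw [← ENNReal.tsum_mul_left]
          exact tsum_congr fun ξ => by rw [mul_pow]
      _ ≤ ENNReal.ofReal (2^s) ^ 2 * ∑' ξ, 4 * ((A ξ)^2 + (B ξ)^2) := by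
          gcongr with ξ
          exact S9.sq_add_le _ _
      _ = ENNReal.ofReal (2^s) ^ 2 * 4 * ((∑' ξ, (A ξ)^2) + ∑' ξ, (B ξ)^2) := by
          rw [ENNReal.tsum_mul_left, ENNReal.tsum_add]
          ring
      _ ≤ ENNReal.ofReal (2^s) ^ 2 * 4 *
            ((∑' ζ, G₂ ζ)^2 * (∑' ξ, (F₁ ξ)^2) + (∑' ζ, G₁ ζ)^2 * (∑' ξ, (F₂ ξ)^2)) := by
          gcongr
          · exact S9.young F₁ G₂
          · exact S9.young F₂ G₁
      _ ≤ ENNReal.ofReal (2^s) ^ 2 * 4 *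
            ((K * hNormSq σ s u₂) * hNormSq σ s u₁ + (K * hNormSq σ s u₁) * hNormSq σ s u₂) := by
          gcongr
          · exact hG_sq_le u₂
          · exact (hNF u₁).ge
          · exact hG_sq_le u₁
          · exact (hNF u₂).ge
      _ = M * (hNormSq σ s u₁ * hNormSq σ s u₂) := by
          rw [hMdef]
          ring
  -- conclude
  have h1 : hNorm σ s (conv u₁ u₂)
      ≤ M ^ (1/2:ℝ) * (hNorm σ s u₁ * hNorm σ s u₂) := by
    rw [hNorm, hNorm, hNorm]
    calc (hNormSq σ s (conv u₁ u₂)) ^ (1/2:ℝ)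
        ≤ (M * (hNormSq σ s u₁ * hNormSq σ s u₂)) ^ (1/2:ℝ) :=
          ENNReal.rpow_le_rpow hmain (by norm_num)
      _ = M ^ (1/2:ℝ) * ((hNormSq σ s u₁) ^ (1/2:ℝ) * (hNormSq σ s u₂) ^ (1/2:ℝ)) := by
          rw [ENNReal.mul_rpow_of_nonneg M _ (by norm_num : (0:ℝ) ≤ 1/2),
            ENNReal.mul_rpow_of_nonneg (hNormSq σ s u₁) (hNormSq σ s u₂)
              (by norm_num : (0:ℝ) ≤ 1/2)]
  have h2 : M ^ (1/2:ℝ) ≤ ENNReal.ofReal C := by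
    rw [hCdef]
    calc M ^ (1/2:ℝ) = (ENNReal.ofReal M.toReal) ^ (1/2:ℝ) := by
          rw [ENNReal.ofReal_toReal hMne]
      _ = ENNReal.ofReal (M.toReal ^ (1/2:ℝ)) :=
          ENNReal.ofReal_rpow_of_nonneg ENNReal.toReal_nonneg (by norm_num)
      _ ≤ ENNReal.ofReal (M.toReal ^ (1/2 : ℝ) + 1) := by
          apply ENNReal.ofReal_le_ofReal
          linarith
  calc hNorm σ s (conv u₁ u₂) ≤ M ^ (1/2:ℝ) * (hNorm σ s u₁ * hNorm σ s u₂) := h1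
    _ ≤ ENNReal.ofReal C * (hNorm σ s u₁ * hNorm σ s u₂) := mul_le_mul_left h2 _
    _ = ENNReal.ofReal C * hNorm σ s u₁ * hNorm σ s u₂ := by ring
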